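/- Let P be positive semidefinite with positive eigenvalues a₁,…,a_r. P has a companion if and only if there exist orthonormal eigenvectors v₁,…,v_r for the positive eigenvalues and orthonormal vectors v_{r+1},…,v_{r+s} in ker P such that Σ_{i=1}^r (a_i / tr P) (v_i ∘ v̄_i) lies in the convex hull of {v_j ∘ v̄_j : r+1 ≤ j ≤ r+s}. -/

import Mathlib

open scoped ComplexOrder

noncomputable def opNorm {n : Type*} [Fintype n] [DecidableEq n] (M : Matrix n n ℂ) : ℝ :=
  ‖(Matrix.toEuclideanCLM (𝕜 := ℂ) M : EuclideanSpace ℂ n →L[ℂ] EuclideanSpace ℂ n)‖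

/-- `M` is minimal: its operator norm is ≤ that of `M + D` for every real diagonal `D`. -/
def IsMinimal {n : Type*} [Fintype n] [DecidableEq n] (M : Matrix n n ℂ) : Prop :=
  ∀ d : n → ℝ, opNorm M ≤ opNorm (M + Matrix.diagonal fun i => (d i : ℂ))

/-- The family `v` is orthonormal for the standard inner product of `ℂⁿ`. -/
def ONFamily {ι : Type*} [DecidableEq ι] {n : Type*} [Fintype n]
    (v : ι → (n → ℂ)) : Prop :=
  ∀ i j, dotProduct (star (v i)) (v j) = if i = j then (1 : ℂ) else 0

open Matrix in
lemma aux_vecMulVec_mulVec {n : Type*} [Fintype n] (x y z : n → ℂ) :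
    vecMulVec x y *ᵥ z = (y ⬝ᵥ z) • x := by
  ext k
  simp only [mulVec, dotProduct, vecMulVec_apply, Pi.smul_apply, smul_eq_mul, Finset.sum_mul]
  exact Finset.sum_congr rfl fun j _ => by ring

open Matrix in
lemma aux_trace_mul_vecMulVec {n : Type*} [Fintype n] (A : Matrix n n ℂ) (x y : n → ℂ) :
    (A * vecMulVec x y).trace = y ⬝ᵥ (A *ᵥ x) := by
  simp only [trace, diag_apply, mul_apply, vecMulVec_apply, dotProduct, mulVec, Finset.mul_sum]
  exact Finset.sum_congr rfl fun i _ => Finset.sum_congr rfl fun j _ => by ring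

open Matrix in
lemma aux_trace_vecMulVec {n : Type*} [Fintype n] (x y : n → ℂ) :
    (vecMulVec x y).trace = y ⬝ᵥ x := by
  simp only [trace, diag_apply, vecMulVec_apply, dotProduct]
  exact Finset.sum_congr rfl fun j _ => mul_comm _ _

open Matrix in
lemma aux_vecMulVec_conjT {n : Type*} [Fintype n] (x : n → ℂ) :
    (vecMulVec x (star x))ᴴ = vecMulVec x (star x) := by
  ext i j
  simp [conjTranspose_apply, vecMulVec_apply, mul_comm]

open Matrix in
lemma aux_mul_vecMulVec {n : Type*} [Fintype n] (A : Matrix n n ℂ) (x y : n → ℂ) :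
    A * vecMulVec x y = vecMulVec (A *ᵥ x) y := by
  ext i j
  simp only [mul_apply, vecMulVec_apply, mulVec, dotProduct, Finset.sum_mul]
  exact Finset.sum_congr rfl fun k _ => by ring

open Matrix in
lemma aux_star_dotProduct {n : Type*} [Fintype n] (x y : n → ℂ) :
    star (star x ⬝ᵥ y) = star y ⬝ᵥ x := by
  simp only [dotProduct, Pi.star_apply, star_sum, star_mul', star_star]
  exact Finset.sum_congr rfl fun k _ => mul_comm _ _

open Matrix in
lemma aux_sum_mulVec {n : Type*} [Fintype n] (c : n → ℝ) (v : n → (n → ℂ)) (x : n → ℂ) :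
    (∑ i, (c i : ℂ) • vecMulVec (v i) (star (v i))) *ᵥ x
      = ∑ i, ((c i : ℂ) * (star (v i) ⬝ᵥ x)) • v i := by
  ext k
  simp only [mulVec, dotProduct, Finset.sum_apply, Pi.smul_apply, smul_eq_mul,
    Matrix.sum_apply, Matrix.smul_apply, vecMulVec_apply, Pi.star_apply,
    Finset.sum_mul, Finset.mul_sum]
  rw [Finset.sum_comm]
  exact Finset.sum_congr rfl fun i _ => Finset.sum_congr rfl fun j _ => by ring

open Matrix in
lemma aux_trace_mul_sum {n : Type*} [Fintype n] (A : Matrix n n ℂ) (c : n → ℝ)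
    (v : n → (n → ℂ)) :
    (A * ∑ i, (c i : ℂ) • vecMulVec (v i) (star (v i))).trace
      = ∑ i, (c i : ℂ) * (star (v i) ⬝ᵥ (A *ᵥ v i)) := by
  rw [Finset.mul_sum, trace_sum]
  refine Finset.sum_congr rfl fun i _ => ?_
  rw [mul_smul_comm, trace_smul, aux_trace_mul_vecMulVec, smul_eq_mul]

open Matrix in
lemma aux_sum_herm {n : Type*} [Fintype n] (c : n → ℝ) (v : n → (n → ℂ)) :
    (∑ i, (c i : ℂ) • vecMulVec (v i) (star (v i)))ᴴ
      = ∑ i, (c i : ℂ) • vecMulVec (v i) (star (v i)) := by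
  rw [conjTranspose_sum]
  refine Finset.sum_congr rfl fun i _ => ?_
  rw [conjTranspose_smul, aux_vecMulVec_conjT, Complex.star_def, Complex.conj_ofReal]

open Matrix in
lemma aux_diag {n : Type*} [Fintype n] (c : n → ℝ) (v : n → (n → ℂ)) (k : n) :
    (∑ i, (c i : ℂ) • vecMulVec (v i) (star (v i))) k k
      = ((∑ i, c i * ‖v i k‖ ^ 2 : ℝ) : ℂ) := by
  push_cast
  rw [Matrix.sum_apply]
  refine Finset.sum_congr rfl fun i _ => ?_
  rw [Matrix.smul_apply, vecMulVec_apply, Pi.star_apply, smul_eq_mul]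
  congr 1
  rw [Complex.star_def, Complex.mul_conj, Complex.normSq_eq_norm_sq]
  push_cast
  ring

open Matrix in
lemma aux_eigen_mulVec {n : Type*} [Fintype n] [DecidableEq n] (c : n → ℝ)
    (v : n → (n → ℂ)) (j : n)
    (hdot : ∀ i, i ≠ j → (c i : ℂ) * (star (v i) ⬝ᵥ v j) = 0)
    (hjj : star (v j) ⬝ᵥ v j = 1) :
    (∑ i, (c i : ℂ) • vecMulVec (v i) (star (v i))) *ᵥ v j = (c j : ℂ) • v j := by
  rw [aux_sum_mulVec]
  rw [Finset.sum_eq_single j (fun i _ hij => by rw [hdot i hij, zero_smul])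
    (fun h => absurd (Finset.mem_univ j) h)]
  rw [hjj, mul_one]

open Matrix in
lemma aux_core_eq {n r m : ℕ} (P : Matrix (Fin n) (Fin n) ℂ) (a : Fin n → ℝ)
    (ha0 : ∀ i : Fin n, r ≤ (i : ℕ) → a i = 0) (hrm : r ≤ m)
    (u : Fin n → (Fin n → ℂ))
    (hu : ∀ i j, star (u i) ⬝ᵥ u j = if i = j then (1 : ℂ) else 0)
    (hP : P = ∑ i, (a i : ℂ) • vecMulVec (u i) (star (u i)))
    (v : Fin n → (Fin n → ℂ))
    (hv : ∀ i j : Fin n, (i : ℕ) < m → (j : ℕ) < m →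
      star (v i) ⬝ᵥ v j = if i = j then (1 : ℂ) else 0)
    (hev : ∀ i : Fin n, (i : ℕ) < m → P *ᵥ v i = (a i : ℂ) • v i) :
    P = ∑ i, (a i : ℂ) • vecMulVec (v i) (star (v i)) := by
  set M : Matrix (Fin n) (Fin n) ℂ := ∑ i, (a i : ℂ) • vecMulVec (v i) (star (v i)) with hM
  have hPu : ∀ j, P *ᵥ u j = (a j : ℂ) • u j := by
    intro j
    rw [hP]
    refine aux_eigen_mulVec a u j (fun i hij => ?_) (by rw [hu j j, if_pos rfl])
    rw [hu i j, if_neg hij, mul_zero]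
  have hvPv : ∀ i : Fin n, (a i : ℂ) * (star (v i) ⬝ᵥ (P *ᵥ v i)) = (a i : ℂ) * (a i : ℂ) := by
    intro i
    by_cases hi : (i : ℕ) < r
    · rw [hev i (lt_of_lt_of_le hi hrm), dotProduct_smul, hv i i (lt_of_lt_of_le hi hrm)
        (lt_of_lt_of_le hi hrm), if_pos rfl, smul_eq_mul, mul_one]
    · rw [ha0 i (le_of_not_gt hi)]
      push_cast
      rw [zero_mul, zero_mul]
  have huPu : ∀ i : Fin n, (a i : ℂ) * (star (u i) ⬝ᵥ (P *ᵥ u i)) = (a i : ℂ) * (a i : ℂ) := by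
    intro i
    rw [hPu i, dotProduct_smul, hu i i, if_pos rfl, smul_eq_mul, mul_one]
  have hMv : ∀ i : Fin n, (a i : ℂ) * (star (v i) ⬝ᵥ (M *ᵥ v i)) = (a i : ℂ) * (a i : ℂ) := by
    intro i
    by_cases hi : (i : ℕ) < r
    · have him : (i : ℕ) < m := lt_of_lt_of_le hi hrm
      have : M *ᵥ v i = (a i : ℂ) • v i := by
        refine aux_eigen_mulVec a v i (fun j hij => ?_) (by rw [hv i i him him, if_pos rfl])
        by_cases hj : (j : ℕ) < m
        · rw [hv j i hj him, if_neg hij, mul_zero]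
        · rw [ha0 j (le_trans hrm (le_of_not_gt hj))]
          push_cast; rw [zero_mul]
      rw [this, dotProduct_smul, hv i i him him, if_pos rfl, smul_eq_mul, mul_one]
    · rw [ha0 i (le_of_not_gt hi)]; push_cast; rw [zero_mul, zero_mul]
  have hPM : (P * M).trace = ∑ i, (a i : ℂ) * (a i : ℂ) := by
    rw [hM, aux_trace_mul_sum]
    exact Finset.sum_congr rfl fun i _ => hvPv i
  have hPP : (P * P).trace = ∑ i, (a i : ℂ) * (a i : ℂ) := by
    have h2 : P * P = P * (∑ i, (a i : ℂ) • vecMulVec (u i) (star (u i))) := by rw [← hP]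
    rw [h2, aux_trace_mul_sum]
    exact Finset.sum_congr rfl fun i _ => huPu i
  have hMM : (M * M).trace = ∑ i, (a i : ℂ) * (a i : ℂ) := by
    have h2 : M * M = M * (∑ i, (a i : ℂ) • vecMulVec (v i) (star (v i))) := by rw [← hM]
    rw [h2, aux_trace_mul_sum]
    exact Finset.sum_congr rfl fun i _ => hMv i
  have hMP : (M * P).trace = ∑ i, (a i : ℂ) * (a i : ℂ) := by
    rw [Matrix.trace_mul_comm]; exact hPM
  have hPh : Pᴴ = P := by rw [hP]; exact aux_sum_herm a u
  have hMh : Mᴴ = M := by rw [hM]; exact aux_sum_herm a v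
  have hD : ((P - M) * (P - M)).trace = 0 := by
    rw [Matrix.sub_mul, Matrix.mul_sub, Matrix.mul_sub, Matrix.trace_sub, Matrix.trace_sub,
      Matrix.trace_sub, hPP, hPM, hMP, hMM]
    ring
  have hDh : (P - M)ᴴ = P - M := by rw [Matrix.conjTranspose_sub, hPh, hMh]
  set D := P - M with hDdef
  have htr : ((D * D).trace) = ∑ k : Fin n, ∑ l : Fin n, (Complex.normSq (D k l) : ℂ) := by
    simp only [Matrix.trace, Matrix.diag_apply, Matrix.mul_apply]
    refine Finset.sum_congr rfl fun k _ => Finset.sum_congr rfl fun l _ => ?_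
    have hc : D l k = starRingEnd ℂ (D k l) := by
      conv_lhs => rw [← hDh]
      rfl
    rw [hc, Complex.mul_conj]
  have hsum : (∑ k : Fin n, ∑ l : Fin n, Complex.normSq (D k l)) = 0 := by
    have h3 := hD
    rw [htr] at h3
    exact_mod_cast h3
  have hD0 : D = 0 := by
    ext k l
    have hk := (Finset.sum_eq_zero_iff_of_nonneg (fun k _ =>
      Finset.sum_nonneg fun l _ => Complex.normSq_nonneg _)).mp hsum k (Finset.mem_univ k)
    have hl := (Finset.sum_eq_zero_iff_of_nonneg (fun l _ =>
      Complex.normSq_nonneg _)).mp hk l (Finset.mem_univ l)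
    simpa using Complex.normSq_eq_zero.mp hl
  have h4 := sub_eq_zero.mp hD0
  rw [h4]

open Matrix in
lemma aux_spectral_sum {n : Type*} [Fintype n] [DecidableEq n] {Q : Matrix n n ℂ}
    (hH : Q.IsHermitian) :
    Q = ∑ j, (hH.eigenvalues j : ℂ) •
      vecMulVec (⇑(hH.eigenvectorBasis j)) (star ⇑(hH.eigenvectorBasis j)) := by
  conv_lhs => rw [hH.spectral_theorem, Unitary.conjStarAlgAut_apply]
  ext i k
  simp only [Matrix.mul_apply, Matrix.diagonal_apply, Matrix.conjTranspose_apply,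
    Matrix.sum_apply, Matrix.smul_apply, Matrix.vecMulVec_apply, Pi.star_apply,
    Matrix.IsHermitian.eigenvectorUnitary_apply, Function.comp_apply, Unitary.coe_star, ite_mul, zero_mul,
    mul_ite, mul_zero, Finset.sum_ite_eq, Finset.sum_ite_eq', Matrix.star_eq_conjTranspose,
    Finset.mem_univ, if_true, smul_eq_mul, RCLike.star_def]
  exact Finset.sum_congr rfl fun j _ => (mul_right_comm _ _ _).trans (mul_comm _ _)

open Matrix in
lemma aux_reindex {n r s : ℕ} (hrsn : r + s ≤ n) (e : Fin s → Fin n)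
    (he : Function.Injective e) (J : Finset (Fin n)) (hJ : ∀ k, k ∈ J ↔ ∃ i, e i = k)
    (h : Fin n → ℝ) :
    (∑ j : Fin n, if hc : r ≤ (j : ℕ) ∧ (j : ℕ) < r + s
      then h (e ⟨(j : ℕ) - r, by omega⟩) else 0) = ∑ k ∈ J, h k := by
  have hJim : J = Finset.univ.image e := by
    ext k
    simp only [Finset.mem_image, Finset.mem_univ, true_and]
    exact hJ k
  set f : Fin n → ℝ := fun j => if hc : r ≤ (j : ℕ) ∧ (j : ℕ) < r + s
      then h (e ⟨(j : ℕ) - r, by omega⟩) else 0 with hf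
  have hκinj : Function.Injective (fun i : Fin s => (⟨r + (i : ℕ), by omega⟩ : Fin n)) := by
    intro i1 i2 h12
    have := congrArg (fun x : Fin n => (x : ℕ)) h12
    simp only at this
    exact Fin.ext (by omega)
  have h1 : (∑ j : Fin n, f j)
      = ∑ j ∈ Finset.univ.image (fun i : Fin s => (⟨r + (i : ℕ), by omega⟩ : Fin n)), f j := by
    symm
    refine Finset.sum_subset (Finset.subset_univ _) (fun j _ hj => ?_)
    refine dif_neg fun hc => hj ?_
    simp only [Finset.mem_image, Finset.mem_univ, true_and]
    exact ⟨⟨(j : ℕ) - r, by omega⟩, Fin.ext (by simp; omega)⟩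
  have h2 : (∑ j ∈ Finset.univ.image (fun i : Fin s => (⟨r + (i : ℕ), by omega⟩ : Fin n)), f j)
      = ∑ i : Fin s, f ⟨r + (i : ℕ), by omega⟩ :=
    Finset.sum_image fun i1 _ i2 _ h12 => hκinj h12
  have h3 : (∑ i : Fin s, f ⟨r + (i : ℕ), by omega⟩) = ∑ i : Fin s, h (e i) := by
    refine Finset.sum_congr rfl fun i _ => ?_
    simp only [hf]
    have hc : r ≤ ((⟨r + (i : ℕ), by omega⟩ : Fin n) : ℕ)
        ∧ ((⟨r + (i : ℕ), by omega⟩ : Fin n) : ℕ) < r + s := by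
      constructor <;> simp <;> omega
    rw [dif_pos hc]
    congr 1
    exact congrArg e (Fin.ext (by simp))
  have h4 : (∑ i : Fin s, h (e i)) = ∑ k ∈ J, h k := by
    rw [hJim, Finset.sum_image fun i1 _ i2 _ h12 => he h12]
  rw [h1, h2, h3, h4]

open Matrix in
lemma aux_dotProduct_sum {n ι : Type*} [Fintype n] [Fintype ι] (x : n → ℂ) (f : ι → (n → ℂ)) :
    x ⬝ᵥ (∑ i, f i) = ∑ i, x ⬝ᵥ f i := by
  simp only [dotProduct, Finset.sum_apply, Finset.mul_sum]
  exact Finset.sum_comm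

open Matrix in
lemma aux_trace_sumON {n : Type*} [Fintype n] (c : n → ℝ) (v : n → (n → ℂ))
    (hd : ∀ i, star (v i) ⬝ᵥ v i = 1) :
    (∑ i, (c i : ℂ) • vecMulVec (v i) (star (v i))).trace = ((∑ i, c i : ℝ) : ℂ) := by
  rw [trace_sum]
  push_cast
  refine Finset.sum_congr rfl fun i _ => ?_
  rw [trace_smul, aux_trace_vecMulVec, hd i, smul_eq_mul, mul_one]

open Matrix in
theorem stmt12 (n r : ℕ) (hr : 0 < r) (hrn : r < n)
    (P : Matrix (Fin n) (Fin n) ℂ) (a : Fin n → ℝ)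
    (hapos : ∀ i : Fin n, (i : ℕ) < r → 0 < a i)
    (ha0 : ∀ i : Fin n, r ≤ (i : ℕ) → a i = 0)
    (u : Fin n → (Fin n → ℂ)) (hu : ONFamily u)
    (hP : P = ∑ i, (a i : ℂ) • Matrix.vecMulVec (u i) (star (u i))) :
    (∃ Q : Matrix (Fin n) (Fin n) ℂ, Q.PosSemidef ∧ P * Q = 0 ∧ ∀ i, P i i = Q i i) ↔
    (∃ s : ℕ, r + s ≤ n ∧
      ∃ v : Fin n → (Fin n → ℂ),
        (∀ i j : Fin n, (i : ℕ) < r + s → (j : ℕ) < r + s →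
          dotProduct (star (v i)) (v j) = if i = j then (1 : ℂ) else 0) ∧
        (∀ i : Fin n, (i : ℕ) < r + s → P.mulVec (v i) = (a i : ℂ) • v i) ∧
        ∃ t : Fin n → ℝ, (∀ j, 0 ≤ t j) ∧
          (∀ j : Fin n, (j : ℕ) < r ∨ r + s ≤ (j : ℕ) → t j = 0) ∧
          (∑ j, t j) = 1 ∧
          ∀ k, ∑ i, (a i / (∑ l, a l)) * ‖v i k‖ ^ 2 = ∑ j, t j * ‖v j k‖ ^ 2) := by
  classical
  have hann : ∀ i : Fin n, 0 ≤ a i := fun i => by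
    by_cases h : (i : ℕ) < r
    · exact (hapos i h).le
    · exact le_of_eq (ha0 i (le_of_not_gt h)).symm
  have hta : 0 < ∑ l, a l :=
    Finset.sum_pos' (fun i _ => hann i)
      ⟨⟨0, lt_trans hr hrn⟩, Finset.mem_univ _, hapos _ hr⟩
  have htane : (∑ l, a l) ≠ 0 := ne_of_gt hta
  have hPu : ∀ j, P *ᵥ u j = (a j : ℂ) • u j := by
    intro j
    rw [hP]
    refine aux_eigen_mulVec a u j (fun i hij => ?_) (by rw [hu j j, if_pos rfl])
    rw [hu i j, if_neg hij, mul_zero]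
  have hPh : Pᴴ = P := by rw [hP]; exact aux_sum_herm a u
  constructor
  · rintro ⟨Q, hQ, hPQ, hdiag⟩
    have hH : Q.IsHermitian := hQ.1
    set μ : Fin n → ℝ := hH.eigenvalues with hmu
    set w : Fin n → (Fin n → ℂ) := fun j => ⇑(hH.eigenvectorBasis j) with hwdef
    have hQsum : Q = ∑ j, (μ j : ℂ) • Matrix.vecMulVec (w j) (star (w j)) :=
      aux_spectral_sum hH
    have hw : ∀ i j, star (w i) ⬝ᵥ w j = if i = j then (1 : ℂ) else 0 := by
      intro i j
      have h1 := orthonormal_iff_ite.mp hH.eigenvectorBasis.orthonormal i j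
      rw [EuclideanSpace.inner_eq_star_dotProduct, dotProduct_comm] at h1
      exact h1
    have hμ0 : ∀ j, 0 ≤ μ j := fun j => hQ.eigenvalues_nonneg j
    have hQw : ∀ j, Q *ᵥ w j = (μ j : ℂ) • w j := by
      intro j
      have h1 := hH.mulVec_eigenvectorBasis j
      rw [hwdef]
      simp only []
      rw [h1]
      ext k
      simp [Complex.real_smul, hmu]
    have hPw : ∀ j, 0 < μ j → P *ᵥ w j = 0 := by
      intro j hj
      have h1 : P *ᵥ (Q *ᵥ w j) = 0 := by rw [Matrix.mulVec_mulVec, hPQ, Matrix.zero_mulVec]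
      rw [hQw j, Matrix.mulVec_smul] at h1
      rcases smul_eq_zero.mp h1 with h2 | h2
      · exact absurd h2 (by exact_mod_cast ne_of_gt hj)
      · exact h2
    have huw : ∀ i : Fin n, (i : ℕ) < r → ∀ j, 0 < μ j → star (u i) ⬝ᵥ w j = 0 := by
      intro i hi j hj
      have h1 : star (P *ᵥ u i) ⬝ᵥ w j = 0 := by
        rw [Matrix.star_mulVec, ← Matrix.dotProduct_mulVec, hPh, hPw j hj,
          dotProduct_zero]
      rw [hPu i, star_smul, smul_dotProduct] at h1
      rcases smul_eq_zero.mp h1 with h2 | h2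
      · exfalso
        have h3 : ((a i : ℂ)) = 0 := by
          have := star_eq_zero.mp h2
          exact this
        exact (hapos i hi).ne' (by exact_mod_cast h3)
      · exact h2
    have hwu : ∀ i : Fin n, (i : ℕ) < r → ∀ j, 0 < μ j → star (w j) ⬝ᵥ u i = 0 := by
      intro i hi j hj
      rw [← aux_star_dotProduct (u i) (w j), huw i hi j hj, star_zero]
    set J : Finset (Fin n) := Finset.univ.filter (fun j => 0 < μ j) with hJdef
    set s := J.card with hsdef
    have hE : Fintype.card {x // x ∈ J} = s := Fintype.card_coe J
    set E : {x // x ∈ J} ≃ Fin s := Fintype.equivFinOfCardEq hE with hEdef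
    set e : Fin s → Fin n := fun i => ((E.symm i : {x // x ∈ J}) : Fin n) with hedef
    have heJ : ∀ i, e i ∈ J := fun i => (E.symm i).2
    have hμe : ∀ i, 0 < μ (e i) := by
      intro i
      exact (Finset.mem_filter.mp (heJ i)).2
    have he_inj : Function.Injective e := fun i1 i2 h12 =>
      E.symm.injective (Subtype.ext h12)
    have hJe : ∀ k, k ∈ J ↔ ∃ i, e i = k := by
      intro k
      constructor
      · intro hk
        refine ⟨E ⟨k, hk⟩, ?_⟩
        rw [hedef]
        simp
      · rintro ⟨i, rfl⟩
        exact heJ i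
    have hrsn : r + s ≤ n := by
      set F : (Fin r ⊕ {x // x ∈ J}) → (Fin n → ℂ) :=
        Sum.elim (fun i => u ⟨(i : ℕ), lt_trans i.isLt hrn⟩)
          (fun j => w (j : Fin n)) with hF
      have hFdot : ∀ x y, star (F x) ⬝ᵥ F y = if x = y then (1 : ℂ) else 0 := by
        rintro (x | x) (y | y)
        · simp only [hF, Sum.elim_inl]
          rw [hu]
          by_cases hxy : x = y
          · subst hxy; simp
          · rw [if_neg (fun hcon => hxy (Fin.ext (by
              have := congrArg Fin.val hcon
              simpa using this))), if_neg (by simpa using hxy)]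
        · simp only [hF, Sum.elim_inl, Sum.elim_inr]
          rw [if_neg (by simp)]
          exact huw _ (by simpa using x.isLt) _ (Finset.mem_filter.mp y.2).2
        · simp only [hF, Sum.elim_inl, Sum.elim_inr]
          rw [if_neg (by simp)]
          exact hwu _ (by simpa using y.isLt) _ (Finset.mem_filter.mp x.2).2
        · simp only [hF, Sum.elim_inr]
          rw [hw]
          by_cases hxy : x = y
          · subst hxy; simp
          · rw [if_neg (fun hcon => hxy (Subtype.ext hcon)), if_neg (by simpa using hxy)]
      have hFli : LinearIndependent ℂ F := by
        rw [Fintype.linearIndependent_iff]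
        intro g hg y
        have h1 := congrArg (fun z => star (F y) ⬝ᵥ z) hg
        simp only [dotProduct_zero] at h1
        rw [aux_dotProduct_sum] at h1
        have h2 : ∀ x, star (F y) ⬝ᵥ (g x • F x) = g x * (if y = x then (1 : ℂ) else 0) :=
          fun x => by rw [dotProduct_smul, hFdot y x, smul_eq_mul]
        rw [Finset.sum_congr rfl (fun x _ => h2 x)] at h1
        simpa using h1
      have hcard := hFli.fintype_card_le_finrank
      rw [Module.finrank_fin_fun] at hcard
      simpa [Fintype.card_sum, Fintype.card_coe, ← hsdef] using hcard
    have htrP : P.trace = ((∑ l, a l : ℝ) : ℂ) := by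
      rw [hP]
      exact aux_trace_sumON a u (fun i => by rw [hu i i, if_pos rfl])
    have htrQ : Q.trace = ((∑ j, μ j : ℝ) : ℂ) := by
      conv_lhs => rw [hQsum]
      exact aux_trace_sumON μ w (fun i => by rw [hw i i, if_pos rfl])
    have htrPQ : P.trace = Q.trace := by
      unfold Matrix.trace
      exact Finset.sum_congr rfl fun i _ => hdiag i
    have hμa : (∑ j, μ j) = ∑ l, a l := by
      have h1 := htrPQ
      rw [htrP, htrQ] at h1
      exact_mod_cast h1.symm
    have hμJ : (∑ k ∈ J, μ k) = ∑ k, μ k := by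
      refine Finset.sum_subset (Finset.subset_univ J) (fun k _ hk => ?_)
      have h1 : ¬ 0 < μ k := fun hc => hk (Finset.mem_filter.mpr ⟨Finset.mem_univ _, hc⟩)
      exact le_antisymm (not_lt.mp h1) (hμ0 k)
    have hdiagsum : ∀ k, (∑ i, a i * ‖u i k‖ ^ 2) = ∑ j, μ j * ‖w j k‖ ^ 2 := by
      intro k
      have h1 : P k k = ((∑ i, a i * ‖u i k‖ ^ 2 : ℝ) : ℂ) := by
        conv_lhs => rw [hP]
        rw [aux_diag]
      have h2 : Q k k = ((∑ j, μ j * ‖w j k‖ ^ 2 : ℝ) : ℂ) := by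
        conv_lhs => rw [hQsum]
        rw [aux_diag]
      have h3 := hdiag k
      rw [h1, h2] at h3
      exact_mod_cast h3
    set v' : Fin n → (Fin n → ℂ) := fun i =>
      if h1 : (i : ℕ) < r then u i
      else if h2 : (i : ℕ) < r + s then w (e ⟨(i : ℕ) - r, by omega⟩) else 0 with hv'
    set t' : Fin n → ℝ := fun j =>
      if hc : r ≤ (j : ℕ) ∧ (j : ℕ) < r + s
      then μ (e ⟨(j : ℕ) - r, by omega⟩) / (∑ l, a l) else 0 with ht'
    refine ⟨s, hrsn, v', ?_, ?_, t', ?_, ?_, ?_, ?_⟩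
    · intro i j hi hj
      simp only [hv']
      by_cases h1 : (i : ℕ) < r <;> by_cases h2 : (j : ℕ) < r
      · rw [dif_pos h1, dif_pos h2]
        exact hu i j
      · rw [dif_pos h1, dif_neg h2, dif_pos hj, if_neg (show i ≠ j from fun hcon => h2 (hcon ▸ h1))]
        exact huw i h1 _ (hμe _)
      · rw [dif_neg h1, dif_pos hi, dif_pos h2, if_neg (show i ≠ j from fun hcon => h1 (hcon.symm ▸ h2))]
        exact hwu j h2 _ (hμe _)
      · rw [dif_neg h1, dif_pos hi, dif_neg h2, dif_pos hj, hw]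
        by_cases hij : i = j
        · subst hij
          rw [if_pos rfl, if_pos rfl]
        · rw [if_neg (fun hcon => hij (by
            have h3 := he_inj hcon
            have h4 := congrArg Fin.val h3
            simp only [] at h4
            exact Fin.ext (by omega))), if_neg hij]
    · intro i hi
      simp only [hv']
      by_cases h1 : (i : ℕ) < r
      · rw [dif_pos h1]
        exact hPu i
      · rw [dif_neg h1, dif_pos hi, ha0 i (le_of_not_gt h1), hPw _ (hμe _)]
        push_cast
        rw [zero_smul]
    · intro j
      simp only [ht']
      split_ifs with h1
      · exact div_nonneg (hμ0 _) hta.le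
      · exact le_refl 0
    · intro j hj
      simp only [ht']
      rw [dif_neg (by omega)]
    · have h8 : (∑ j, t' j) = ∑ k ∈ J, μ k / (∑ l, a l) := by
        refine Eq.trans (Finset.sum_congr rfl fun j _ => ?_)
          (aux_reindex hrsn e he_inj J hJe (fun k => μ k / (∑ l, a l)))
        simp only [ht']
      rw [h8, ← Finset.sum_div, hμJ, hμa, div_self htane]
    · intro k
      have hL : ∀ i : Fin n, a i / (∑ l, a l) * ‖v' i k‖ ^ 2
          = a i / (∑ l, a l) * ‖u i k‖ ^ 2 := by
        intro i
        by_cases h1 : (i : ℕ) < r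
        · simp only [hv']
          rw [dif_pos h1]
        · rw [ha0 i (le_of_not_gt h1)]
          simp
      rw [Finset.sum_congr rfl fun i _ => hL i]
      have hR : (∑ j, t' j * ‖v' j k‖ ^ 2)
          = ∑ k' ∈ J, μ k' / (∑ l, a l) * ‖w k' k‖ ^ 2 := by
        refine Eq.trans (Finset.sum_congr rfl fun j _ => ?_)
          (aux_reindex hrsn e he_inj J hJe (fun k' => μ k' / (∑ l, a l) * ‖w k' k‖ ^ 2))
        by_cases hcj : r ≤ (j : ℕ) ∧ (j : ℕ) < r + s
        · rw [dif_pos hcj]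
          simp only [ht', hv']
          rw [dif_pos hcj, dif_neg (by omega), dif_pos hcj.2]
        · rw [dif_neg hcj]
          simp only [ht']
          rw [dif_neg hcj, zero_mul]
      rw [hR]
      have hJext : (∑ k' ∈ J, μ k' / (∑ l, a l) * ‖w k' k‖ ^ 2)
          = ∑ k', μ k' / (∑ l, a l) * ‖w k' k‖ ^ 2 := by
        refine Finset.sum_subset (Finset.subset_univ J) (fun k' _ hk' => ?_)
        have h1 : ¬ 0 < μ k' := fun hc => hk' (Finset.mem_filter.mpr ⟨Finset.mem_univ _, hc⟩)
        rw [le_antisymm (not_lt.mp h1) (hμ0 k'), zero_div, zero_mul]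
      rw [hJext]
      have h9 : ∀ (b : Fin n → ℝ) (x : Fin n → ℝ),
          (∑ i, b i / (∑ l, a l) * x i) = (∑ i, b i * x i) / (∑ l, a l) := by
        intro b x
        rw [Finset.sum_div]
        exact Finset.sum_congr rfl fun i _ => by ring
      rw [h9 a (fun i => ‖u i k‖ ^ 2), h9 μ (fun j => ‖w j k‖ ^ 2), hdiagsum k]
  · rintro ⟨s, hsn, v, hv, hev, t, ht0, htz, ht1, hdg⟩
    have hPM := aux_core_eq (m := r + s) P a ha0 (Nat.le_add_right r s) u hu hP v hv hev
    set c : Fin n → ℝ := fun j => (∑ l, a l) * t j with hc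
    refine ⟨∑ j, (c j : ℂ) • Matrix.vecMulVec (v j) (star (v j)), posSemidef_iff_dotProduct_mulVec.mpr ⟨aux_sum_herm c v, ?_⟩, ?_, ?_⟩
    · -- positivity
      intro x
      rw [aux_sum_mulVec, aux_dotProduct_sum]
      have hterm : ∀ j, star x ⬝ᵥ (((c j : ℂ) * (star (v j) ⬝ᵥ x)) • v j)
          = ((c j * Complex.normSq (star (v j) ⬝ᵥ x) : ℝ) : ℂ) := by
        intro j
        rw [dotProduct_smul, smul_eq_mul]
        have hx : star x ⬝ᵥ v j = star (star (v j) ⬝ᵥ x) := (aux_star_dotProduct (v j) x).symm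
        rw [hx]
        push_cast
        rw [Complex.star_def, mul_assoc, Complex.mul_conj]
      rw [Finset.sum_congr rfl fun j _ => hterm j, ← Complex.ofReal_sum]
      rw [Complex.zero_le_real]
      refine Finset.sum_nonneg fun j _ => mul_nonneg (mul_nonneg hta.le (ht0 j))
        (Complex.normSq_nonneg _)
    · -- P * Q = 0
      rw [Finset.mul_sum]
      refine Finset.sum_eq_zero fun j _ => ?_
      rw [mul_smul_comm, aux_mul_vecMulVec]
      by_cases hj : t j = 0
      · have : c j = 0 := by rw [hc]; simp [hj]
        rw [this]
        push_cast
        rw [zero_smul]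
      · have hcond : r ≤ (j : ℕ) ∧ (j : ℕ) < r + s := by
          by_contra hcon
          exact hj (htz j (by omega))
        have hz : P *ᵥ v j = 0 := by
          rw [hev j hcond.2, ha0 j hcond.1]
          push_cast
          rw [zero_smul]
        rw [hz]
        have : Matrix.vecMulVec (0 : Fin n → ℂ) (star (v j)) = 0 := by
          ext i k; simp [Matrix.vecMulVec_apply]
        rw [this, smul_zero]
    · -- diagonal
      intro k
      rw [aux_diag]
      have hPkk : P k k = ((∑ i, a i * ‖v i k‖ ^ 2 : ℝ) : ℂ) := by
        conv_lhs => rw [hPM]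
        rw [aux_diag]
      rw [hPkk]
      norm_cast
      have h5 := hdg k
      have h6 : (∑ l, a l) * (∑ i, a i / (∑ l, a l) * ‖v i k‖ ^ 2)
          = ∑ i, a i * ‖v i k‖ ^ 2 := by
        rw [Finset.mul_sum]
        refine Finset.sum_congr rfl fun i _ => ?_
        field_simp
      have h7 : (∑ l, a l) * (∑ j, t j * ‖v j k‖ ^ 2) = ∑ j, c j * ‖v j k‖ ^ 2 := by
        rw [Finset.mul_sum]
        refine Finset.sum_congr rfl fun j _ => ?_
        rw [hc]; ring
      rw [← h6, h5, h7]
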